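/- A claw-induced-saturated graph has at most one vertex of degree two. -/

import Mathlib

open SimpleGraph

/-- `G` contains an induced copy of `H`. -/
def HasInducedCopy {W V : Type*} (H : SimpleGraph W) (G : SimpleGraph V) : Prop :=
  Nonempty (H ↪g G)

/-- `G` is `H`-induced-saturated: `G` has no induced copy of `H`, but deleting any edge
or adding any non-edge creates an induced copy of `H`. -/
def IsIndSat {V W : Type*} (G : SimpleGraph V) (H : SimpleGraph W) : Prop :=
  ¬ HasInducedCopy H G ∧
  (∀ u v : V, G.Adj u v → HasInducedCopy H (G.deleteEdges {s(u, v)})) ∧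
  (∀ u v : V, u ≠ v → ¬ G.Adj u v →
    HasInducedCopy H (G ⊔ SimpleGraph.fromEdgeSet {s(u, v)}))

/-- The claw `K_{1,3}`: star with center `0` and leaves `1, 2, 3`. -/
def claw : SimpleGraph (Fin 4) :=
  SimpleGraph.fromRel (fun i _ => i = 0)

lemma claw_adj_iff (i j : Fin 4) : claw.Adj i j ↔ i ≠ j ∧ (i = 0 ∨ j = 0) := by
  simp [claw, SimpleGraph.fromRel_adj]

/-- Extraction lemma for deleting an edge. -/
lemma del_extract {V : Type*} {G : SimpleGraph V} {v a : V}
    (hfree : ¬HasInducedCopy claw G)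
    (hcopy : HasInducedCopy claw (G.deleteEdges {s(v, a)})) :
    ∃ c w, G.Adj c v ∧ G.Adj c a ∧ G.Adj c w ∧ ¬G.Adj v w ∧ ¬G.Adj a w ∧ w ≠ v ∧ w ≠ a := by
  obtain ⟨f⟩ := hcopy
  have key : ∃ i j, ¬claw.Adj i j ∧ G.Adj (f i) (f j) := by
    by_contra hk
    push_neg at hk
    refine hfree ⟨⟨f.toEmbedding, ?_⟩⟩
    intro i j
    constructor
    · intro hG
      by_contra hc
      exact hk i j hc hG
    · intro hc
      exact ((SimpleGraph.deleteEdges_adj).1 (f.map_rel_iff.2 hc)).1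
  obtain ⟨i, j, hnadj, hGadj⟩ := key
  have hij : i ≠ j := by
    intro h; subst h; exact hGadj.ne rfl
  have hij0 : i ≠ 0 ∧ j ≠ 0 := by
    rw [claw_adj_iff] at hnadj
    push_neg at hnadj
    have := hnadj hij
    exact this
  obtain ⟨hi0, hj0⟩ := hij0
  have hnG' : ¬(G.deleteEdges {s(v, a)}).Adj (f i) (f j) := fun h => hnadj (f.map_rel_iff.1 h)
  have hs : s(f i, f j) = s(v, a) := by
    rw [SimpleGraph.deleteEdges_adj] at hnG'
    push_neg at hnG'
    simpa using hnG' hGadj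
  obtain ⟨k, hk0, hki, hkj⟩ : ∃ k : Fin 4, k ≠ 0 ∧ k ≠ i ∧ k ≠ j := by
    have : ∀ i j : Fin 4, i ≠ j → i ≠ 0 → j ≠ 0 → ∃ k, k ≠ 0 ∧ k ≠ i ∧ k ≠ j := by decide
    exact this i j hij hi0 hj0
  have hadj_of_claw : ∀ p q : Fin 4, claw.Adj p q → G.Adj (f p) (f q) := fun p q h =>
    ((SimpleGraph.deleteEdges_adj).1 (f.map_rel_iff.2 h)).1
  have A0i : G.Adj (f 0) (f i) := hadj_of_claw 0 i ((claw_adj_iff 0 i).2 ⟨Ne.symm hi0, Or.inl rfl⟩)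
  have A0j : G.Adj (f 0) (f j) := hadj_of_claw 0 j ((claw_adj_iff 0 j).2 ⟨Ne.symm hj0, Or.inl rfl⟩)
  have A0k : G.Adj (f 0) (f k) := hadj_of_claw 0 k ((claw_adj_iff 0 k).2 ⟨Ne.symm hk0, Or.inl rfl⟩)
  have nleaf : ∀ p q : Fin 4, p ≠ q → p ≠ 0 → q ≠ 0 → q ≠ i ∨ p ≠ i →
      ¬(G.deleteEdges {s(v, a)}).Adj (f p) (f q) := by
    intro p q hpq hp0 hq0 _ h
    have := (claw_adj_iff p q).1 (f.map_rel_iff.1 h)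
    rcases this.2 with h' | h' <;> [exact hp0 h'; exact hq0 h']
  have nik : ¬G.Adj (f i) (f k) := by
    intro h
    have h' := nleaf i k (Ne.symm hki) hi0 hk0 (Or.inl hki)
    rw [SimpleGraph.deleteEdges_adj] at h'
    push_neg at h'
    have he := h' h
    rw [Set.mem_singleton_iff] at he
    have he2 := he.trans hs.symm
    rw [Sym2.congr_right] at he2
    exact hkj (f.injective he2)
  have njk : ¬G.Adj (f j) (f k) := by
    intro h
    have h' := nleaf j k (Ne.symm hkj) hj0 hk0 (Or.inl hki)
    rw [SimpleGraph.deleteEdges_adj] at h'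
    push_neg at h'
    have he := h' h
    rw [Set.mem_singleton_iff] at he
    have he2 := he.trans hs.symm
    rw [Sym2.eq_iff] at he2
    rcases he2 with ⟨h1, h2⟩ | ⟨h1, h2⟩
    · exact hkj (f.injective h2)
    · exact hki (f.injective h2)
  rw [Sym2.eq_iff] at hs
  obtain ⟨c, w, Aci, Acj, Acw, niw, njw, hwi, hwj⟩ :
      ∃ c w, G.Adj c (f i) ∧ G.Adj c (f j) ∧ G.Adj c w ∧ ¬G.Adj (f i) w ∧ ¬G.Adj (f j) w ∧
        w ≠ f i ∧ w ≠ f j :=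
    ⟨f 0, f k, A0i, A0j, A0k, nik, njk,
      fun h => hki (f.injective h), fun h => hkj (f.injective h)⟩
  rcases hs with ⟨h1, h2⟩ | ⟨h1, h2⟩
  · rw [h1] at Aci niw hwi
    rw [h2] at Acj njw hwj
    exact ⟨c, w, Aci, Acj, Acw, niw, njw, hwi, hwj⟩
  · rw [h1] at Aci niw hwi
    rw [h2] at Acj njw hwj
    exact ⟨c, w, Acj, Aci, Acw, njw, niw, hwj, hwi⟩

/-- Extraction lemma for adding an edge. -/
lemma add_extract {V : Type*} {G : SimpleGraph V} {u v : V}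
    (hfree : ¬HasInducedCopy claw G)
    (hcopy : HasInducedCopy claw (G ⊔ SimpleGraph.fromEdgeSet {s(u, v)})) :
    ∃ w x y, (w = u ∨ w = v) ∧ G.Adj w x ∧ G.Adj w y ∧ x ≠ y ∧ ¬G.Adj x y := by
  obtain ⟨f⟩ := hcopy
  set G' := G ⊔ SimpleGraph.fromEdgeSet {s(u, v)} with hG'
  have hle : ∀ x y, G.Adj x y → G'.Adj x y := fun x y h => Or.inl h
  have key : ∃ i j, claw.Adj i j ∧ ¬G.Adj (f i) (f j) := by
    by_contra hk
    push_neg at hk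
    refine hfree ⟨⟨f.toEmbedding, ?_⟩⟩
    intro i j
    constructor
    · intro hG
      exact f.map_rel_iff.1 (hle _ _ hG)
    · intro hc
      exact hk i j hc
  obtain ⟨i, j, hcij, hnG⟩ := key
  obtain ⟨l, hl0, hnl⟩ : ∃ l : Fin 4, l ≠ 0 ∧ ¬G.Adj (f 0) (f l) := by
    rcases (claw_adj_iff i j).1 hcij with ⟨hne, h0 | h0⟩
    · exact ⟨j, fun h => hne (h0.trans h.symm), h0 ▸ hnG⟩
    · exact ⟨i, fun h => hne (h ▸ h0.symm ▸ rfl), fun h => hnG (h0 ▸ h.symm)⟩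
  have hG'0l : G'.Adj (f 0) (f l) :=
    f.map_rel_iff.2 ((claw_adj_iff 0 l).2 ⟨Ne.symm hl0, Or.inl rfl⟩)
  have hs : s(f 0, f l) = s(u, v) := by
    rcases hG'0l with h | h
    · exact absurd h hnl
    · simpa using (SimpleGraph.fromEdgeSet_adj _).1 h |>.1
  obtain ⟨l', l'', hl'0, hl''0, hl'l, hl''l, hl'l''⟩ :
      ∃ l' l'' : Fin 4, l' ≠ 0 ∧ l'' ≠ 0 ∧ l' ≠ l ∧ l'' ≠ l ∧ l' ≠ l'' := by
    have : ∀ l : Fin 4, l ≠ 0 → ∃ l' l'' : Fin 4,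
        l' ≠ 0 ∧ l'' ≠ 0 ∧ l' ≠ l ∧ l'' ≠ l ∧ l' ≠ l'' := by decide
    exact this l hl0
  have hGleaf : ∀ m : Fin 4, m ≠ 0 → m ≠ l → G.Adj (f 0) (f m) := by
    intro m hm0 hml
    have hG'm : G'.Adj (f 0) (f m) :=
      f.map_rel_iff.2 ((claw_adj_iff 0 m).2 ⟨Ne.symm hm0, Or.inl rfl⟩)
    rcases hG'm with h | h
    · exact h
    · exfalso
      have := (SimpleGraph.fromEdgeSet_adj _).1 h |>.1
      rw [Set.mem_singleton_iff, ← hs, Sym2.congr_right] at this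
      exact hml (f.injective this)
  have hnadj : ¬G.Adj (f l') (f l'') := by
    intro h
    have : claw.Adj l' l'' := f.map_rel_iff.1 (hle _ _ h)
    rcases (claw_adj_iff l' l'').1 this with ⟨_, h0 | h0⟩
    · exact hl'0 h0
    · exact hl''0 h0
  refine ⟨f 0, f l', f l'', ?_, hGleaf l' hl'0 hl'l, hGleaf l'' hl''0 hl''l,
    fun h => hl'l'' (f.injective h), hnadj⟩
  rw [Sym2.eq_iff] at hs
  rcases hs with ⟨h1, _⟩ | ⟨h1, _⟩
  · exact Or.inl h1
  · exact Or.inr h1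


/-- A claw-induced-saturated graph has at most one vertex of degree two. -/
theorem claw_indSat_degree_two_subsingleton {V : Type*} [Fintype V] (G : SimpleGraph V)
    [DecidableRel G.Adj] (h : IsIndSat G claw) :
    {v : V | G.degree v = 2}.Subsingleton := by
  classical
  intro p hp q hq
  by_contra hpq
  simp only [Set.mem_setOf_eq, SimpleGraph.degree] at hp hq
  obtain ⟨a, b, hab, hNp⟩ := Finset.card_eq_two.1 hp
  have memp : ∀ x, G.Adj p x ↔ x = a ∨ x = b := by
    intro x
    rw [← SimpleGraph.mem_neighborFinset, hNp]
    simp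
  have hpa : G.Adj p a := (memp a).2 (Or.inl rfl)
  have hpb : G.Adj p b := (memp b).2 (Or.inr rfl)
  obtain ⟨cq, dq, hcd, hNq⟩ := Finset.card_eq_two.1 hq
  have memq : ∀ x, G.Adj q x ↔ x = cq ∨ x = dq := by
    intro x
    rw [← SimpleGraph.mem_neighborFinset, hNq]
    simp
  have hqc : G.Adj q cq := (memq cq).2 (Or.inl rfl)
  have hqd : G.Adj q dq := (memq dq).2 (Or.inr rfl)
  -- first deletion at p, edge (p, a): the other neighbor b is adjacent to a
  obtain ⟨c1, w1, hc1p, hc1a, hc1w1, hpw1, haw1, hw1p, hw1a⟩ := del_extract h.1 (h.2.1 p a hpa)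
  have hc1b : c1 = b := by
    rcases (memp c1).1 hc1p.symm with h' | h'
    · exact absurd h' hc1a.ne
    · exact h'
  rw [hc1b] at hc1a hc1w1
  -- deletion at q, edge (q, cq): dq adjacent to cq
  obtain ⟨c2, w2, hc2q, hc2c, _, _, _, _, _⟩ := del_extract h.1 (h.2.1 q cq hqc)
  have hc2d : c2 = dq := by
    rcases (memq c2).1 hc2q.symm with h' | h'
    · exact absurd h' hc2c.ne
    · exact h'
  rw [hc2d] at hc2c
  by_cases hadj : G.Adj p q
  · rcases (memp q).1 hadj with rfl | rfl
    · -- q = a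
      obtain ⟨c3, w3, hc3p, hc3b, hc3w3, hpw3, hbw3, hw3p, hw3b⟩ :=
        del_extract h.1 (h.2.1 p b hpb)
      have hc3a : c3 = q := by
        rcases (memp c3).1 hc3p.symm with h' | h'
        · exact h'
        · exact absurd h' hc3b.ne
      subst hc3a
      have h1 := (memq w3).1 hc3w3
      have h2 := (memq p).1 hadj.symm
      have h3 := (memq b).1 hc1a.symm
      rcases h1 with rfl | rfl <;> rcases h2 with h2 | h2 <;> rcases h3 with h3 | h3 <;>
        first
          | exact hw3p h2.symm
          | exact hw3b h3.symm
          | exact hpb.ne (h2.trans h3.symm)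
    · -- q = b
      have h1 := (memq w1).1 hc1w1
      have h2 := (memq p).1 hadj.symm
      have h3 := (memq a).1 hc1a
      rcases h1 with rfl | rfl <;> rcases h2 with h2 | h2 <;> rcases h3 with h3 | h3 <;>
        first
          | exact hw1p h2.symm
          | exact hw1a h3.symm
          | exact hpa.ne (h2.trans h3.symm)
  · obtain ⟨w, x, y, hw, hwx, hwy, hxy, hnxy⟩ := add_extract h.1 (h.2.2 p q hpq hadj)
    rcases hw with rfl | rfl
    · rcases (memp x).1 hwx with rfl | rfl <;> rcases (memp y).1 hwy with rfl | rfl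
      · exact hxy rfl
      · exact hnxy hc1a.symm
      · exact hnxy hc1a
      · exact hxy rfl
    · rcases (memq x).1 hwx with rfl | rfl <;> rcases (memq y).1 hwy with rfl | rfl
      · exact hxy rfl
      · exact hnxy hc2c.symm
      · exact hnxy hc2c
      · exact hxy rfl
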